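/- Let H ∈ C(ℝⁿ×ℝⁿ) satisfy (A2)–(A4), and suppose that for each x ∈ ℝⁿ the function p ↦ H(x,p) is strictly convex on ℝⁿ. Then H satisfies both (A6)₊ and (A6)₋. -/

import Mathlib

noncomputable section

open Filter Set Topology

namespace HJpaper

/-- Points of `ℝⁿ` (with the Euclidean norm). -/
abbrev E (n : ℕ) := EuclideanSpace ℝ (Fin n)

/-- The vector of `ℝⁿ` with integer coordinates `k`. -/
def lat (n : ℕ) (k : Fin n → ℤ) : E n :=
  (WithLp.equiv 2 (Fin n → ℝ)).symm fun i => (k i : ℝ)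

/-- `f : ℝⁿ → ℝ` is `ℤⁿ`-periodic. -/
def Per {n : ℕ} (f : E n → ℝ) : Prop :=
  ∀ (x : E n) (k : Fin n → ℤ), f (x + lat n k) = f x

/-- (A2): continuity of the Hamiltonian. -/
def ContH {n : ℕ} (H : E n → E n → ℝ) : Prop :=
  Continuous fun q : E n × E n => H q.1 q.2

/-- (A3): `ℤⁿ`-periodicity of the Hamiltonian in `x`. -/
def PerH {n : ℕ} (H : E n → E n → ℝ) : Prop :=
  ∀ p : E n, Per fun x => H x p

/-- (A4): coercivity of the Hamiltonian. -/
def Coercive {n : ℕ} (H : E n → E n → ℝ) : Prop :=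
  ∀ M : ℝ, ∃ r : ℝ, ∀ x p : E n, r ≤ ‖p‖ → M ≤ H x p

/-- viscosity subsolution of `u_t + H(x, D_x u) = 0` in `Q = ℝⁿ × (0,∞)`. -/
def CPSub {n : ℕ} (H : E n → E n → ℝ) (u : E n → ℝ → ℝ) : Prop :=
  ∀ φ : E n → ℝ → ℝ, ContDiff ℝ 1 (fun q : E n × ℝ => φ q.1 q.2) →
    ∀ (x : E n) (t : ℝ), 0 < t →
      IsLocalMaxOn (fun q : E n × ℝ => u q.1 q.2 - φ q.1 q.2)
        {q : E n × ℝ | 0 < q.2} (x, t) →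
      deriv (fun s => φ x s) t + H x (gradient (fun y => φ y t) x) ≤ 0

/-- viscosity supersolution of `u_t + H(x, D_x u) = 0` in `Q = ℝⁿ × (0,∞)`. -/
def CPSuper {n : ℕ} (H : E n → E n → ℝ) (u : E n → ℝ → ℝ) : Prop :=
  ∀ φ : E n → ℝ → ℝ, ContDiff ℝ 1 (fun q : E n × ℝ => φ q.1 q.2) →
    ∀ (x : E n) (t : ℝ), 0 < t →
      IsLocalMinOn (fun q : E n × ℝ => u q.1 q.2 - φ q.1 q.2)
        {q : E n × ℝ | 0 < q.2} (x, t) →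
      0 ≤ deriv (fun s => φ x s) t + H x (gradient (fun y => φ y t) x)

/-- viscosity solution of `u_t + H(x, D_x u) = 0` in `Q`. -/
def CPSol {n : ℕ} (H : E n → E n → ℝ) (u : E n → ℝ → ℝ) : Prop :=
  CPSub H u ∧ CPSuper H u

/-- `u` is a solution of the Cauchy problem (CP) for the data `u₀`: it is uniformly
continuous on `ℝⁿ × [0,∞)`, `ℤⁿ`-periodic in `x`, a viscosity solution of the PDE in
`Q = ℝⁿ × (0,∞)`, and attains the initial data (continuously, by uniform continuity). -/
def IsCP {n : ℕ} (H : E n → E n → ℝ) (u₀ : E n → ℝ) (u : E n → ℝ → ℝ) : Prop :=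
  UniformContinuousOn (fun q : E n × ℝ => u q.1 q.2) {q : E n × ℝ | 0 ≤ q.2} ∧
  (∀ t : ℝ, 0 ≤ t → Per fun x => u x t) ∧
  CPSol H u ∧
  ∀ x : E n, u x 0 = u₀ x

/-- viscosity subsolution of `H(x, Dv(x)) ≤ g(x)` in `ℝⁿ`. -/
def StatSub {n : ℕ} (H : E n → E n → ℝ) (g : E n → ℝ) (v : E n → ℝ) : Prop :=
  ∀ φ : E n → ℝ, ContDiff ℝ 1 φ →
    ∀ x : E n, IsLocalMax (fun y => v y - φ y) x → H x (gradient φ x) ≤ g x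

/-- viscosity supersolution of `H(x, Dv(x)) ≥ g(x)` in `ℝⁿ`. -/
def StatSuper {n : ℕ} (H : E n → E n → ℝ) (g : E n → ℝ) (v : E n → ℝ) : Prop :=
  ∀ φ : E n → ℝ, ContDiff ℝ 1 φ →
    ∀ x : E n, IsLocalMin (fun y => v y - φ y) x → g x ≤ H x (gradient φ x)

/-- viscosity solution of `H(x, Dv(x)) = c` in `ℝⁿ`. -/
def StatSol {n : ℕ} (H : E n → E n → ℝ) (c : ℝ) (v : E n → ℝ) : Prop :=
  StatSub H (fun _ => c) v ∧ StatSuper H (fun _ => c) v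

/-- Lipschitz continuity (with some constant). -/
def IsLip {n : ℕ} (f : E n → ℝ) : Prop := ∃ K : NNReal, LipschitzWith K f

/-- (A5): the additive eigenvalue is zero, i.e. `H(x,Dv)=0` has a Lipschitz
`ℤⁿ`-periodic viscosity solution. -/
def A5 {n : ℕ} (H : E n → E n → ℝ) : Prop :=
  ∃ v : E n → ℝ, IsLip v ∧ Per v ∧ StatSol H 0 v

/-- condition (A6)₊. -/
def A6plus {n : ℕ} (H : E n → E n → ℝ) : Prop :=
  ∃ η₀ > (0:ℝ), ∃ θ₀ > (1:ℝ),
    ∀ η ∈ Set.Ioo (0:ℝ) η₀, ∀ θ ∈ Set.Ioo (1:ℝ) θ₀, ∃ ψ > (0:ℝ),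
      ∀ x p q : E n, H x p ≤ 0 → η ≤ H x q → η * θ + ψ ≤ H x (p + θ • (q - p))

/-- condition (A6)₋. -/
def A6minus {n : ℕ} (H : E n → E n → ℝ) : Prop :=
  ∃ η₀ > (0:ℝ), ∃ θ₀ > (1:ℝ),
    ∀ η ∈ Set.Ioo (0:ℝ) η₀, ∀ θ ∈ Set.Ioo (1:ℝ) θ₀, ∃ ψ > (0:ℝ),
      ∀ x p q : E n, H x p ≤ 0 → -η ≤ H x q → -(η * θ) + ψ ≤ H x (p + θ • (q - p))

/-- the modulus `ω_{H,R}`. -/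
def omegaH {n : ℕ} (H : E n → E n → ℝ) (R r : ℝ) : ℝ :=
  sSup {a : ℝ | ∃ x p q : E n, ‖p‖ ≤ R ∧ ‖q‖ ≤ R ∧ ‖p - q‖ ≤ r ∧ a = |H x p - H x q|}

/-- `w(x,t) = sup_{s ≥ t} [u(x,t) − v₀(x) − θ(u(x,s) − v₀(x) + η(s−t))]`. -/
def wPlus {n : ℕ} (u : E n → ℝ → ℝ) (v₀ : E n → ℝ) (η θ : ℝ) (x : E n) (t : ℝ) : ℝ :=
  sSup {a : ℝ | ∃ s : ℝ, t ≤ s ∧ a = u x t - v₀ x - θ * (u x s - v₀ x + η * (s - t))}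

/-- `w(x,t) = max_{0 ≤ s ≤ t} [u(x,t) − v₀(x) − θ(u(x,s) − v₀(x) − η(s−t))]`. -/
def wMinus {n : ℕ} (u : E n → ℝ → ℝ) (v₀ : E n → ℝ) (η θ : ℝ) (x : E n) (t : ℝ) : ℝ :=
  sSup {a : ℝ | ∃ s : ℝ, 0 ≤ s ∧ s ≤ t ∧ a = u x t - v₀ x - θ * (u x s - v₀ x - η * (s - t))}

lemma cube_compact (n : ℕ) : IsCompact {x : E n | ∀ i, x i ∈ Set.Icc (0:ℝ) 1} := by
  have h := (isCompact_univ_pi (fun _ : Fin n => isCompact_Icc (a := (0:ℝ)) (b := 1))).image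
    (EuclideanSpace.equiv (Fin n) ℝ).symm.continuous
  convert h using 1
  ext x
  constructor
  · intro hx; exact ⟨fun i => x i, fun i _ => hx i, rfl⟩
  · rintro ⟨y, hy, rfl⟩ i; exact hy i (Set.mem_univ i)

lemma key_aux {n : ℕ} (H : E n → E n → ℝ)
    (hHc : ContH H) (hHp : PerH H) (hco : Coercive H)
    (hsc : ∀ (x p q : E n), p ≠ q → ∀ lam : ℝ, 0 < lam → lam < 1 →
      H x (lam • p + (1 - lam) • q) < lam * H x p + (1 - lam) * H x q)
    (σ : ℝ) (hσ : σ = 1 ∨ σ = -1)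
    {η θ : ℝ} (hη : η ∈ Set.Ioo (0:ℝ) 1) (hθ : θ ∈ Set.Ioo (1:ℝ) 2) :
    ∃ ψ > (0:ℝ), ∀ x p q : E n, H x p ≤ 0 → σ * η ≤ H x q →
      σ * (η * θ) + ψ ≤ H x (p + θ • (q - p)) := by
  obtain ⟨hη0, hη1⟩ := hη
  obtain ⟨hθ1, hθ2⟩ := hθ
  have hθ0 : (0:ℝ) < θ := by linarith
  obtain ⟨r0, hr0⟩ := hco 1
  obtain ⟨r2, hr2⟩ := hco 3
  set R0 : ℝ := max r0 0 with hR0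
  set R2 : ℝ := max r2 0 with hR2
  set R1 : ℝ := R2 + R0 with hR1
  have hR0nn : 0 ≤ R0 := le_max_right _ _
  have hR2nn : 0 ≤ R2 := le_max_right _ _
  have hp_bound : ∀ x p : E n, H x p ≤ 0 → ‖p‖ ≤ R0 := by
    intro x p h
    by_contra hc
    push_neg at hc
    have := hr0 x p (le_trans (le_trans (le_max_left _ _) hc.le) le_rfl)
    linarith
  -- the compact set
  set K : Set (E n × E n × E n) :=
    {a | (∀ i, a.1 i ∈ Set.Icc (0:ℝ) 1) ∧ a.2.1 ∈ Metric.closedBall (0:E n) R0 ∧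
      a.2.2 ∈ Metric.closedBall (0:E n) R1 ∧ H a.1 a.2.1 ≤ 0 ∧ σ * η ≤ H a.1 a.2.2} with hK
  have hKcomp : IsCompact K := by
    have h1 : IsCompact (({x : E n | ∀ i, x i ∈ Set.Icc (0:ℝ) 1} ×ˢ
        (Metric.closedBall (0:E n) R0 ×ˢ Metric.closedBall (0:E n) R1)) :
        Set (E n × E n × E n)) :=
      (cube_compact n).prod ((isCompact_closedBall _ _).prod (isCompact_closedBall _ _))
    have hc1 : Continuous fun a : E n × E n × E n => H a.1 a.2.1 :=
      hHc.comp (continuous_fst.prodMk (continuous_fst.comp continuous_snd))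
    have hc2 : Continuous fun a : E n × E n × E n => H a.1 a.2.2 :=
      hHc.comp (continuous_fst.prodMk (continuous_snd.comp continuous_snd))
    have h2 : IsClosed {a : E n × E n × E n | H a.1 a.2.1 ≤ 0 ∧ σ * η ≤ H a.1 a.2.2} :=
      (isClosed_le hc1 continuous_const).inter (isClosed_le continuous_const hc2)
    have hKeq : K = ({x : E n | ∀ i, x i ∈ Set.Icc (0:ℝ) 1} ×ˢ
        (Metric.closedBall (0:E n) R0 ×ˢ Metric.closedBall (0:E n) R1)) ∩
        {a : E n × E n × E n | H a.1 a.2.1 ≤ 0 ∧ σ * η ≤ H a.1 a.2.2} := by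
      ext a
      simp only [hK, Set.mem_setOf_eq, Set.mem_inter_iff, Set.mem_prod]
      tauto
    rw [hKeq]
    exact h1.inter_right h2
  -- F
  set F : E n × E n × E n → ℝ := fun a => H a.1 (a.2.1 + θ • (a.2.2 - a.2.1)) with hF
  have hFc : Continuous F := by
    rw [hF]
    exact hHc.comp (continuous_fst.prodMk
      ((continuous_fst.comp continuous_snd).add
        ((continuous_const (y := θ)).smul ((continuous_snd.comp continuous_snd).sub
          (continuous_fst.comp continuous_snd)))))
  -- strict positivity on K
  have hpos : ∀ a ∈ K, σ * (η * θ) < F a := by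
    rintro ⟨x, p, q⟩ ⟨-, -, -, hp', hq'⟩
    have hp : H x p ≤ 0 := hp'
    have hq : σ * η ≤ H x q := hq'
    simp only [hF]
    by_cases hpq : p = q
    · subst hpq
      simp only [sub_self, smul_zero, add_zero]
      rcases hσ with rfl | rfl
      · simp only [one_mul] at hq; linarith
      · simp only [neg_one_mul] at hq ⊢; nlinarith
    · have hne : p + θ • (q - p) ≠ p := by
        intro hc
        apply hpq
        have : θ • (q - p) = 0 := by
          have := congrArg (· - p) hc
          simpa using this
        rcases smul_eq_zero.mp this with h | h
        · exact absurd h (by positivity)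
        · have := sub_eq_zero.mp h; exact this.symm
      have hq' : (θ⁻¹) • (p + θ • (q - p)) + (1 - θ⁻¹) • p = q := by
        rw [smul_add, smul_smul, inv_mul_cancel₀ (ne_of_gt hθ0), one_smul,
          sub_smul, one_smul]
        abel
      have hconv := hsc x (p + θ • (q - p)) p hne θ⁻¹ (by positivity)
        (by rw [inv_lt_one_iff₀]; right; exact hθ1)
      rw [hq'] at hconv
      have hθne : θ ≠ 0 := ne_of_gt hθ0
      set r : E n := p + θ • (q - p) with hrdef
      have h1 : θ * H x q < θ * (θ⁻¹ * H x r + (1 - θ⁻¹) * H x p) :=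
        mul_lt_mul_of_pos_left hconv hθ0
      have h2 : θ * (θ⁻¹ * H x r + (1 - θ⁻¹) * H x p) = H x r + (θ - 1) * H x p := by
        field_simp
      have h3 : (θ - 1) * H x p ≤ 0 := mul_nonpos_of_nonneg_of_nonpos (by linarith) hp
      have h4 : σ * (η * θ) ≤ θ * H x q := by
        calc σ * (η * θ) = θ * (σ * η) := by ring
          _ ≤ θ * H x q := mul_le_mul_of_nonneg_left hq hθ0.le
      linarith
  -- minimum on K
  obtain ⟨ψK, hψKpos, hψKle⟩ : ∃ c > (0:ℝ), ∀ a ∈ K, σ * (η * θ) + c ≤ F a := by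
    rcases K.eq_empty_or_nonempty with hemp | hne
    · exact ⟨1, one_pos, by simp [hemp]⟩
    · obtain ⟨a, haK, hmin⟩ := hKcomp.exists_isMinOn hne hFc.continuousOn
      refine ⟨F a - σ * (η * θ), by linarith [hpos a haK], ?_⟩
      intro b hb
      have := isMinOn_iff.mp hmin b hb
      linarith
  refine ⟨min ψK 1, lt_min hψKpos one_pos, ?_⟩
  intro x p q hp hq
  have hpR : ‖p‖ ≤ R0 := hp_bound x p hp
  -- periodic shift
  set k : Fin n → ℤ := fun i => -⌊x i⌋ with hk
  set x' : E n := x + lat n k with hx'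
  have hx'i : ∀ i, x' i ∈ Set.Icc (0:ℝ) 1 := by
    intro i
    have hco' : x' i = x i - (⌊x i⌋ : ℝ) := by
      simp only [hx', hk, lat]
      simp [sub_eq_add_neg]
    rw [hco']
    constructor
    · linarith [Int.floor_le (x i)]
    · linarith [Int.lt_floor_add_one (x i)]
  have hH' : ∀ p : E n, H x' p = H x p := fun p => hHp p x k
  by_cases hqR : ‖q‖ ≤ R1
  · have hmem : (x', p, q) ∈ K := by
      refine ⟨hx'i, ?_, ?_, ?_, ?_⟩ <;>
        simp only [Metric.mem_closedBall, dist_zero_right, hH']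
      · exact hpR
      · exact hqR
      · exact hp
      · exact hq
    have hle := hψKle (x', p, q) hmem
    have hle' : σ * (η * θ) + ψK ≤ H x (p + θ • (q - p)) := by
      have heq : F (x', p, q) = H x (p + θ • (q - p)) := by
        simp only [hF]
        exact hH' _
      rw [heq] at hle
      exact hle
    linarith [min_le_left ψK 1]
  · push_neg at hqR
    have hnr : θ * ‖q‖ - (θ - 1) * ‖p‖ ≤ ‖p + θ • (q - p)‖ := by
      have h : p + θ • (q - p) = θ • q - (θ - 1) • p := by module
      rw [h]
      have h2 := norm_sub_norm_le (θ • q) ((θ-1) • p)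
      rw [norm_smul, norm_smul, Real.norm_eq_abs, Real.norm_eq_abs,
        abs_of_pos hθ0, abs_of_pos (by linarith)] at h2
      linarith
    have hqp : ‖p‖ ≤ ‖q‖ := by
      calc ‖p‖ ≤ R0 := hpR
        _ ≤ R1 := by rw [hR1]; linarith
        _ ≤ ‖q‖ := hqR.le
    have hrbig : r2 ≤ ‖p + θ • (q - p)‖ := by
      have : ‖q‖ ≤ θ * ‖q‖ - (θ - 1) * ‖p‖ := by nlinarith
      have hr2R2 : r2 ≤ R2 := le_max_left _ _
      have : R2 ≤ ‖q‖ := by rw [hR1] at hqR; linarith [hqR.le, hR0nn]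
      linarith
    have h3 := hr2 x _ hrbig
    have hσb : σ * (η * θ) ≤ η * θ := by
      rcases hσ with rfl | rfl
      · simp
      · nlinarith
    have : min ψK 1 ≤ 1 := min_le_right _ _
    nlinarith

/-- strict convexity of `H(x,·)` implies (A6)₊ and (A6)₋. -/
theorem stmt_13 {n : ℕ} (H : E n → E n → ℝ)
    (hHc : ContH H) (hHp : PerH H) (hco : Coercive H)
    (hsc : ∀ (x p q : E n), p ≠ q → ∀ lam : ℝ, 0 < lam → lam < 1 →
      H x (lam • p + (1 - lam) • q) < lam * H x p + (1 - lam) * H x q) :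
    A6plus H ∧ A6minus H := by
  constructor
  · refine ⟨1, one_pos, 2, one_lt_two, fun η hη θ hθ => ?_⟩
    obtain ⟨ψ, hψ, h⟩ := key_aux H hHc hHp hco hsc 1 (Or.inl rfl) hη hθ
    refine ⟨ψ, hψ, fun x p q h1 h2 => ?_⟩
    have h3 := h x p q h1 (by rw [one_mul]; exact h2)
    linarith
  · refine ⟨1, one_pos, 2, one_lt_two, fun η hη θ hθ => ?_⟩
    obtain ⟨ψ, hψ, h⟩ := key_aux H hHc hHp hco hsc (-1) (Or.inr rfl) hη hθ
    refine ⟨ψ, hψ, fun x p q h1 h2 => ?_⟩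
    have h3 := h x p q h1 (by rw [neg_one_mul]; exact h2)
    linarith
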